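/- For any λ > λ₀, set μ := μ(λ) = ln(y(λ) + √(y(λ)² − 1)), c := λ/μ, and define V : [0,1] → ℝ by V(x) = (β/(sinh(√(λ/d))·Δ(λ)))·[√(λd)·cosh(√(λ/d)·(1−x)) + α·sinh(√(λ/d)·(1−x))] + (β·e^{−μ}/(sinh(√(λ/d))·Δ(λ)))·[√(λd)·cosh(√(λ/d)·x) + α·sinh(√(λ/d)·x)]. Then V(x) > 0 for all x ∈ [0,1], and the family (v_j(t,x), ρ_j(t)) := (e^{−μ(j−ct)}·V(x), e^{−μ(j−ct)}) solves the linearized city-road system: ∂_t v_j = d ∂_x² v_j on (0,1), ρ_j'(t) = f'(0)·ρ_j(t) + α(v_j(t,0) + v_{j−1}(t,1)) − 2β ρ_j(t), with boundary conditions −d ∂_x v_j(t,0) + α v_j(t,0) = β ρ_j(t) and d ∂_x v_j(t,1) + α v_j(t,1) = β ρ_{j+1}(t), for all t > 0 and j ∈ ℤ. -/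

import Mathlib

open Set Filter

noncomputable section

def Δfun (α d lam : ℝ) : ℝ :=
  α ^ 2 + d * lam + 2 * α * Real.sqrt (d * lam) / Real.tanh (Real.sqrt (lam / d))

def yfun (α β d r lam : ℝ) : ℝ :=
  (Δfun α d lam / (2 * α * β) * (lam + 2 * β - r)
      - (α + Real.sqrt (d * lam) / Real.tanh (Real.sqrt (lam / d))))
    * (Real.sinh (Real.sqrt (lam / d)) / Real.sqrt (d * lam))

def mufun (α β d r lam : ℝ) : ℝ :=
  Real.log (yfun α β d r lam + Real.sqrt ((yfun α β d r lam) ^ 2 - 1))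

def Vprof (α β d lam mu x : ℝ) : ℝ :=
  β / (Real.sinh (Real.sqrt (lam / d)) * Δfun α d lam) *
      (Real.sqrt (lam * d) * Real.cosh (Real.sqrt (lam / d) * (1 - x))
        + α * Real.sinh (Real.sqrt (lam / d) * (1 - x)))
    + β * Real.exp (-mu) / (Real.sinh (Real.sqrt (lam / d)) * Δfun α d lam) *
      (Real.sqrt (lam * d) * Real.cosh (Real.sqrt (lam / d) * x)
        + α * Real.sinh (Real.sqrt (lam / d) * x))

/-- derivative of `K cosh(q y) + a sinh(q y)` -/
lemma aux1 (K a q x : ℝ) :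
    HasDerivAt (fun y : ℝ => K * Real.cosh (q * y) + a * Real.sinh (q * y))
      (q * (K * Real.sinh (q * x) + a * Real.cosh (q * x))) x := by
  have h1 : HasDerivAt (fun y : ℝ => q * y) q x := by
    simpa using (hasDerivAt_id x).const_mul q
  have h2 := ((Real.hasDerivAt_cosh (q * x)).comp x h1).const_mul K
  have h3 := ((Real.hasDerivAt_sinh (q * x)).comp x h1).const_mul a
  have h := h2.add h3
  refine h.congr_deriv ?_
  ring

/-- derivative of `K sinh(q y) + a cosh(q y)` -/
lemma aux1' (K a q x : ℝ) :
    HasDerivAt (fun y : ℝ => K * Real.sinh (q * y) + a * Real.cosh (q * y))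
      (q * (K * Real.cosh (q * x) + a * Real.sinh (q * x))) x := by
  have h1 : HasDerivAt (fun y : ℝ => q * y) q x := by
    simpa using (hasDerivAt_id x).const_mul q
  have h2 := ((Real.hasDerivAt_sinh (q * x)).comp x h1).const_mul K
  have h3 := ((Real.hasDerivAt_cosh (q * x)).comp x h1).const_mul a
  have h := h2.add h3
  refine h.congr_deriv ?_
  ring

lemma aux2 (K a q x : ℝ) :
    HasDerivAt (fun y : ℝ => K * Real.cosh (q * (1 - y)) + a * Real.sinh (q * (1 - y)))
      (-(q * (K * Real.sinh (q * (1 - x)) + a * Real.cosh (q * (1 - x))))) x := by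
  have h0 : HasDerivAt (fun y : ℝ => 1 - y) (-1) x := by
    simpa using (hasDerivAt_id x).const_sub (1 : ℝ)
  have h := (aux1 K a q (1 - x)).comp x h0
  refine h.congr_deriv ?_
  ring

lemma aux2' (K a q x : ℝ) :
    HasDerivAt (fun y : ℝ => K * Real.sinh (q * (1 - y)) + a * Real.cosh (q * (1 - y)))
      (-(q * (K * Real.cosh (q * (1 - x)) + a * Real.sinh (q * (1 - x))))) x := by
  have h0 : HasDerivAt (fun y : ℝ => 1 - y) (-1) x := by
    simpa using (hasDerivAt_id x).const_sub (1 : ℝ)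
  have h := (aux1' K a q (1 - x)).comp x h0
  refine h.congr_deriv ?_
  ring

lemma key_bd0 (α β d q sh ch Δ C1 C2 : ℝ) (hsh : sh ≠ 0) (hΔ : Δ ≠ 0)
    (hC1 : C1 = β / (sh * Δ))
    (hshΔ : sh * Δ = (α ^ 2 + d * (d * q ^ 2)) * sh + 2 * α * (d * q) * ch) :
    -d * (C1 * (-(q * (d * q * sh + α * ch))) + C2 * (q * α))
      + α * (C1 * (d * q * ch + α * sh) + C2 * (d * q)) = β := by
  have e1 : -d * (C1 * (-(q * (d * q * sh + α * ch))) + C2 * (q * α))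
      + α * (C1 * (d * q * ch + α * sh) + C2 * (d * q)) = C1 * (sh * Δ) := by
    rw [hshΔ]; ring
  rw [e1, hC1]
  field_simp

lemma key_bd1 (α β d q sh ch Δ C1 C2 en : ℝ) (hsh : sh ≠ 0) (hΔ : Δ ≠ 0)
    (hC2 : C2 = β * en / (sh * Δ))
    (hshΔ : sh * Δ = (α ^ 2 + d * (d * q ^ 2)) * sh + 2 * α * (d * q) * ch) :
    d * (C1 * (-(q * α)) + C2 * (q * (d * q * sh + α * ch)))
      + α * (C1 * (d * q) + C2 * (d * q * ch + α * sh)) = β * en := by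
  have e1 : d * (C1 * (-(q * α)) + C2 * (q * (d * q * sh + α * ch)))
      + α * (C1 * (d * q) + C2 * (d * q * ch + α * sh)) = C2 * (sh * Δ) := by
    rw [hshΔ]; ring
  rw [e1, hC2]
  field_simp

lemma key_disp (α β d q Y sh ch Δ X em en C1 : ℝ) (hβ : β ≠ 0)
    (hsh : sh ≠ 0) (hΔ : Δ ≠ 0)
    (hC1 : C1 = β / (sh * Δ))
    (hee : em * en = 1) (hsum : em + en = 2 * Y)
    (hYeq2 : 2 * α * β * (d * q * Y) = Δ * sh * X - 2 * α * β * (α * sh + d * q * ch)) :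
    α * ((C1 * (d * q * ch + α * sh) + C1 * en * (d * q))
      + em * (C1 * (d * q) + C1 * en * (d * q * ch + α * sh))) = X := by
  have e2 : α * ((C1 * (d * q * ch + α * sh) + C1 * en * (d * q))
      + em * (C1 * (d * q) + C1 * en * (d * q * ch + α * sh)))
      = C1 * α * (2 * (d * q * ch + α * sh) + d * q * (2 * Y)) := by
    linear_combination (α * C1 * (d * q * ch + α * sh)) * hee + (α * C1 * (d * q)) * hsum
  rw [e2, hC1]
  field_simp
  linear_combination hYeq2

set_option maxHeartbeats 1000000 in
/-- **Exponential solutions of the linearized system**: for every `λ > λ₀`, setting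
`μ = μ(λ)`, `c = λ/μ`, the profile `V` is positive on `[0,1]` and the family
`(v_j(t,x), ρ_j(t)) = (e^{−μ(j−ct)} V(x), e^{−μ(j−ct)})` solves the city-road system
linearized at the trivial state. -/
theorem exponential_solutions_linearized
    (α β d : ℝ) (hα : 0 < α) (hβ : 0 < β) (hd : 0 < d)
    (f : ℝ → ℝ) (hf : ContDiff ℝ 1 f) (hf0 : f 0 = 0) (hf1 : f 1 = 0)
    (hfpos : ∀ u ∈ Ioo (0:ℝ) 1, 0 < f u ∧ f u ≤ deriv f 0 * u)
    (hr : 0 < deriv f 0)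
    (lam0 : ℝ) (hlam0 : 0 < lam0)
    (hy0 : yfun α β d (deriv f 0) lam0 = 1)
    (hygt : ∀ lam' : ℝ, lam0 < lam' → 1 < yfun α β d (deriv f 0) lam')
    (lam : ℝ) (hlam : lam0 < lam)
    (mu c : ℝ) (hmu : mu = mufun α β d (deriv f 0) lam) (hc : c = lam / mu) :
    (∀ x ∈ Icc (0:ℝ) 1, 0 < Vprof α β d lam mu x) ∧
    (∀ j : ℤ, ∀ t : ℝ, 0 < t → ∀ x ∈ Ioo (0:ℝ) 1,
      deriv (fun s => Real.exp (-mu * ((j : ℝ) - c * s)) * Vprof α β d lam mu x) t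
        = d * deriv (deriv
            (fun y => Real.exp (-mu * ((j : ℝ) - c * t)) * Vprof α β d lam mu y)) x) ∧
    (∀ j : ℤ, ∀ t : ℝ, 0 < t →
      deriv (fun s => Real.exp (-mu * ((j : ℝ) - c * s))) t
        = deriv f 0 * Real.exp (-mu * ((j : ℝ) - c * t))
          + α * (Real.exp (-mu * ((j : ℝ) - c * t)) * Vprof α β d lam mu 0
             + Real.exp (-mu * (((j : ℝ) - 1) - c * t)) * Vprof α β d lam mu 1)
          - 2 * β * Real.exp (-mu * ((j : ℝ) - c * t))) ∧
    (∀ j : ℤ, ∀ t : ℝ, 0 < t →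
      -d * deriv (fun y => Real.exp (-mu * ((j : ℝ) - c * t)) * Vprof α β d lam mu y) 0
          + α * (Real.exp (-mu * ((j : ℝ) - c * t)) * Vprof α β d lam mu 0)
        = β * Real.exp (-mu * ((j : ℝ) - c * t))) ∧
    (∀ j : ℤ, ∀ t : ℝ, 0 < t →
      d * deriv (fun y => Real.exp (-mu * ((j : ℝ) - c * t)) * Vprof α β d lam mu y) 1
          + α * (Real.exp (-mu * ((j : ℝ) - c * t)) * Vprof α β d lam mu 1)
        = β * Real.exp (-mu * (((j : ℝ) + 1) - c * t))) := by
  have hlampos : 0 < lam := hlam0.trans hlam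
  set r := deriv f 0 with hr0
  set q := Real.sqrt (lam / d) with hq
  set K := Real.sqrt (lam * d) with hKdef
  have hqpos : 0 < q := Real.sqrt_pos.mpr (by positivity)
  have hq2 : d * q ^ 2 = lam := by
    rw [hq, Real.sq_sqrt (by positivity : (0:ℝ) ≤ lam / d)]
    field_simp
  have hK : K = d * q := by
    rw [hKdef, hq]
    rw [show lam * d = d ^ 2 * (lam / d) by field_simp, Real.sqrt_mul (by positivity),
      Real.sqrt_sq hd.le]
  have hKdl : Real.sqrt (d * lam) = d * q := by
    rw [mul_comm, ← hKdef]; exact hK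
  have hshpos : 0 < Real.sinh q := Real.sinh_pos_iff.mpr hqpos
  have hchpos : 0 < Real.cosh q := Real.cosh_pos q
  have hsh' : Real.sinh q ≠ 0 := ne_of_gt hshpos
  have hΔ : Δfun α d lam = α ^ 2 + d * lam + 2 * α * (d * q) * Real.cosh q / Real.sinh q := by
    rw [Δfun, hKdl, Real.tanh_eq_sinh_div_cosh, ← hq]
    rw [div_div_eq_mul_div]
  have hΔpos : 0 < Δfun α d lam := by
    rw [hΔ]; positivity
  have hΔ' : Δfun α d lam ≠ 0 := ne_of_gt hΔpos
  have hshΔ : Real.sinh q * Δfun α d lam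
      = (α ^ 2 + d * (d * q ^ 2)) * Real.sinh q + 2 * α * (d * q) * Real.cosh q := by
    rw [hΔ, ← hq2]
    field_simp
  -- y and mu facts
  set Y := yfun α β d r lam with hYdef
  have hY : 1 < Y := hygt lam hlam
  have hw2 : Real.sqrt (Y ^ 2 - 1) ^ 2 = Y ^ 2 - 1 := Real.sq_sqrt (by nlinarith)
  set w := Real.sqrt (Y ^ 2 - 1) with hwdef
  have hwnn : 0 ≤ w := Real.sqrt_nonneg _
  have hYw : 1 < Y + w := by linarith
  have hemu : Real.exp mu = Y + w := by
    rw [hmu, mufun]; exact Real.exp_log (by linarith)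
  have hprod1 : (Y + w) * (Y - w) = 1 := by linear_combination -hw2
  have hne : Y - w ≠ 0 := by
    intro h0; rw [h0, mul_zero] at hprod1; norm_num at hprod1
  have hemun : Real.exp (-mu) = Y - w := by
    rw [Real.exp_neg, hemu, inv_eq_iff_eq_inv]
    field_simp
    linear_combination hprod1
  have hsum : Real.exp mu + Real.exp (-mu) = 2 * Y := by rw [hemu, hemun]; ring
  have hee : Real.exp mu * Real.exp (-mu) = 1 := by
    rw [← Real.exp_add]; simp
  have hmupos : 0 < mu := by
    rw [hmu, mufun]
    exact Real.log_pos (by rw [← hYdef, ← hwdef]; exact hYw)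
  have hmuc : mu * c = lam := by rw [hc]; field_simp
  -- the key dispersion consequence of the definition of Y
  have hYeq : 2 * α * β * (d * q * Y)
      = Δfun α d lam * Real.sinh q * (lam + 2 * β - r)
        - 2 * α * β * (α * Real.sinh q + d * q * Real.cosh q) := by
    have h : Y = (Δfun α d lam / (2 * α * β) * (lam + 2 * β - r)
        - (α + (d * q) * Real.cosh q / Real.sinh q)) * (Real.sinh q / (d * q)) := by
      rw [hYdef, yfun, hKdl, Real.tanh_eq_sinh_div_cosh, ← hq, div_div_eq_mul_div]
    rw [h]
    field_simp
  -- abbreviations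
  set Δ := Δfun α d lam with hΔdef
  set C1 := β / (Real.sinh q * Δ) with hC1
  set C2 := β * Real.exp (-mu) / (Real.sinh q * Δ) with hC2
  have hC1pos : 0 < C1 := by rw [hC1]; positivity
  have hC2pos : 0 < C2 := by rw [hC2]; positivity
  have hC2eq : C2 = C1 * Real.exp (-mu) := by rw [hC1, hC2]; ring
  -- endpoint values
  have hV0 : Vprof α β d lam mu 0 = C1 * (K * Real.cosh q + α * Real.sinh q) + C2 * K := by
    simp only [Vprof, ← hq, ← hKdef, ← hΔdef, ← hC1, ← hC2]
    norm_num
  have hV1 : Vprof α β d lam mu 1 = C1 * K + C2 * (K * Real.cosh q + α * Real.sinh q) := by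
    simp only [Vprof, ← hq, ← hKdef, ← hΔdef, ← hC1, ← hC2]
    norm_num
  -- first derivative of the profile
  set Vp : ℝ → ℝ := fun x =>
      C1 * (-(q * (K * Real.sinh (q * (1 - x)) + α * Real.cosh (q * (1 - x)))))
      + C2 * (q * (K * Real.sinh (q * x) + α * Real.cosh (q * x))) with hVp
  have hVd : ∀ x : ℝ, HasDerivAt (fun y => Vprof α β d lam mu y) (Vp x) x := by
    intro x
    have h := ((aux2 K α q x).const_mul C1).add ((aux1 K α q x).const_mul C2)
    exact h
  have hVpd : ∀ x : ℝ, HasDerivAt Vp (q ^ 2 * Vprof α β d lam mu x) x := by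
    intro x
    have h := ((aux2' K α q x).const_mul (-(C1 * q))).add ((aux1' K α q x).const_mul (C2 * q))
    have hfun : Vp = (fun y =>
        -(C1 * q) * (K * Real.sinh (q * (1 - y)) + α * Real.cosh (q * (1 - y)))
        + C2 * q * (K * Real.sinh (q * y) + α * Real.cosh (q * y))) := by
      funext y; rw [hVp]; ring
    rw [hfun]
    refine h.congr_deriv ?_
    simp only [Vprof, ← hq, ← hKdef, ← hΔdef, ← hC1, ← hC2]
    ring
  have hVp0 : Vp 0 = C1 * (-(q * (K * Real.sinh q + α * Real.cosh q))) + C2 * (q * α) := by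
    rw [hVp]; norm_num
  have hVp1 : Vp 1 = C1 * (-(q * α)) + C2 * (q * (K * Real.sinh q + α * Real.cosh q)) := by
    rw [hVp]; norm_num
  -- scalar boundary identities
  have hbd0 : -d * Vp 0 + α * Vprof α β d lam mu 0 = β := by
    rw [hVp0, hV0, hK]
    exact key_bd0 α β d q (Real.sinh q) (Real.cosh q) Δ C1 C2 hsh' hΔ' hC1 hshΔ
  have hbd1 : d * Vp 1 + α * Vprof α β d lam mu 1 = β * Real.exp (-mu) := by
    rw [hVp1, hV1, hK]
    exact key_bd1 α β d q (Real.sinh q) (Real.cosh q) Δ C1 C2 (Real.exp (-mu)) hsh' hΔ' hC2 hshΔ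
  -- dispersion identity
  have hdisp : α * (Vprof α β d lam mu 0 + Real.exp mu * Vprof α β d lam mu 1)
      = lam + 2 * β - r := by
    rw [hV0, hV1, hC2eq, hK]
    exact key_disp α β d q Y (Real.sinh q) (Real.cosh q) Δ (lam + 2 * β - r)
      (Real.exp mu) (Real.exp (-mu)) C1 (ne_of_gt hβ) hsh' hΔ' hC1 hee hsum hYeq
  -- time-derivative of the exponential factor
  have hT : ∀ (j : ℤ) (t : ℝ), HasDerivAt (fun s : ℝ => Real.exp (-mu * ((j : ℝ) - c * s)))
      (Real.exp (-mu * ((j : ℝ) - c * t)) * lam) t := by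
    intro j t
    have h1 : HasDerivAt (fun s : ℝ => -mu * ((j : ℝ) - c * s)) (mu * c) t := by
      have h0 : HasDerivAt (fun s : ℝ => (j : ℝ) - c * s) (-c) t := by
        simpa using ((hasDerivAt_id t).const_mul c).const_sub ((j : ℝ))
      have h2 := h0.const_mul (-mu)
      refine h2.congr_deriv ?_; ring
    have h3 := h1.exp
    rw [hmuc] at h3
    exact h3
  refine ⟨?_, ?_, ?_, ?_, ?_⟩
  · -- positivity of the profile
    intro x hx
    obtain ⟨hx0, hx1⟩ := hx
    have hKpos : 0 < K := by rw [hK]; positivity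
    have h1 : 0 < K * Real.cosh (q * (1 - x)) + α * Real.sinh (q * (1 - x)) := by
      have hs1 : 0 ≤ Real.sinh (q * (1 - x)) :=
        Real.sinh_nonneg_iff.mpr (mul_nonneg hqpos.le (by linarith))
      exact add_pos_of_pos_of_nonneg (mul_pos hKpos (Real.cosh_pos _))
        (mul_nonneg hα.le hs1)
    have h2 : 0 < K * Real.cosh (q * x) + α * Real.sinh (q * x) := by
      have hs2 : 0 ≤ Real.sinh (q * x) :=
        Real.sinh_nonneg_iff.mpr (mul_nonneg hqpos.le (by linarith))
      exact add_pos_of_pos_of_nonneg (mul_pos hKpos (Real.cosh_pos _))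
        (mul_nonneg hα.le hs2)
    have hVx : Vprof α β d lam mu x
        = C1 * (K * Real.cosh (q * (1 - x)) + α * Real.sinh (q * (1 - x)))
          + C2 * (K * Real.cosh (q * x) + α * Real.sinh (q * x)) := by
      simp only [Vprof, ← hq, ← hKdef, ← hΔdef, ← hC1, ← hC2]
    rw [hVx]
    positivity
  · -- PDE
    intro j t _ x _
    have hL := ((hT j t).mul_const (Vprof α β d lam mu x)).deriv
    rw [hL]
    have hder : deriv (fun y => Real.exp (-mu * ((j : ℝ) - c * t)) * Vprof α β d lam mu y)
        = fun y => Real.exp (-mu * ((j : ℝ) - c * t)) * Vp y := by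
      funext y
      exact ((hVd y).const_mul _).deriv
    rw [hder, ((hVpd x).const_mul (Real.exp (-mu * ((j : ℝ) - c * t)))).deriv]
    rw [← hq2]
    ring
  · -- rho ODE
    intro j t _
    rw [(hT j t).deriv]
    have hE : Real.exp (-mu * (((j : ℝ) - 1) - c * t))
        = Real.exp (-mu * ((j : ℝ) - c * t)) * Real.exp mu := by
      rw [← Real.exp_add]; congr 1; ring
    rw [hE]
    linear_combination (-Real.exp (-mu * ((j : ℝ) - c * t))) * hdisp
  · -- boundary at 0
    intro j t _
    have hder : deriv (fun y => Real.exp (-mu * ((j : ℝ) - c * t)) * Vprof α β d lam mu y) 0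
        = Real.exp (-mu * ((j : ℝ) - c * t)) * Vp 0 := ((hVd 0).const_mul _).deriv
    rw [hder]
    linear_combination Real.exp (-mu * ((j : ℝ) - c * t)) * hbd0
  · -- boundary at 1
    intro j t _
    have hder : deriv (fun y => Real.exp (-mu * ((j : ℝ) - c * t)) * Vprof α β d lam mu y) 1
        = Real.exp (-mu * ((j : ℝ) - c * t)) * Vp 1 := ((hVd 1).const_mul _).deriv
    rw [hder]
    have hE : Real.exp (-mu * (((j : ℝ) + 1) - c * t))
        = Real.exp (-mu * ((j : ℝ) - c * t)) * Real.exp (-mu) := by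
      rw [← Real.exp_add]; congr 1; ring
    rw [hE]
    linear_combination Real.exp (-mu * ((j : ℝ) - c * t)) * hbd1
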